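/- For every s ∈ ℂ with |s| < 1/2, the series ∑_{k=2}^{∞} ((−1)^{k−1}/k)·(2^{k−1} − 1)·ζ(k)·s^k converges absolutely and Γ(1 + s)² / Γ(1 + 2s) = exp( 2·∑_{k=2}^{∞} ((−1)^{k−1}/k)·(2^{k−1} − 1)·ζ(k)·s^k ). -/

import Mathlib

open Complex Filter Finset Topology

lemma zeta_norm_le {k : ℕ} (hk : 2 ≤ k) : ‖riemannZeta k‖ ≤ ∑' n : ℕ, 1 / ((n : ℝ)) ^ 2 := by
  have hsum2 : Summable (fun n : ℕ => 1 / ((n : ℝ)) ^ 2) :=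
    Real.summable_one_div_nat_pow.mpr one_lt_two
  have hsumk : Summable (fun n : ℕ => 1 / ((n : ℝ)) ^ k) :=
    Real.summable_one_div_nat_pow.mpr hk
  have hsumk' : Summable (fun n : ℕ => ‖1 / ((n : ℂ)) ^ k‖) := by simpa using hsumk
  rw [zeta_nat_eq_tsum_of_gt_one hk]
  refine (norm_tsum_le_tsum_norm hsumk').trans (Summable.tsum_le_tsum (fun n => ?_) hsumk' hsum2)
  rcases Nat.eq_zero_or_pos n with rfl | hn
  · simp [zero_pow (by omega : k ≠ 0)]
  · simp only [norm_div, norm_one, norm_pow, norm_natCast]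
    gcongr
    all_goals first | exact_mod_cast hn | omega



lemma stmt14_summable (s : ℂ) (hs : ‖s‖ < 1 / 2) :
    Summable (fun k : ℕ => ‖(if 2 ≤ k then
      ((-1 : ℂ) ^ (k - 1) / (k : ℂ)) * ((2 : ℂ) ^ (k - 1) - 1) *
        riemannZeta (k : ℂ) * s ^ k else 0)‖) := by
  set Z : ℝ := ∑' n : ℕ, 1 / ((n : ℝ)) ^ 2 with hZ
  have hZ0 : 0 ≤ Z := tsum_nonneg (fun n => by positivity)
  have hr : ‖s‖ < 1/2 := hs
  have hgeom : Summable (fun k : ℕ => Z * (2 * ‖s‖) ^ k) := by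
    refine (summable_geometric_of_lt_one (by positivity) (by linarith)).mul_left Z
  refine hgeom.of_nonneg_of_le (fun k => norm_nonneg _) (fun k => ?_)
  by_cases hk : 2 ≤ k
  · simp only [if_pos hk]
    have h1 : ‖((-1 : ℂ) ^ (k - 1) / (k : ℂ))‖ ≤ 1 := by
      rw [norm_div, norm_pow, norm_neg, norm_one, one_pow]
      rw [div_le_one (by exact_mod_cast (by omega : (0:ℕ) < k))]
      · simp; exact_mod_cast (by omega : 1 ≤ k)
    have h2 : ‖((2 : ℂ) ^ (k - 1) - 1)‖ ≤ 2 ^ k := by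
      refine (norm_sub_le _ _).trans ?_
      rw [norm_pow, norm_one]
      have : ‖(2:ℂ)‖ = 2 := by norm_num
      rw [this]
      have : (2:ℝ) ^ (k-1) + 1 ≤ 2 ^ (k-1) + 2^(k-1) := by
        have : (1:ℝ) ≤ 2 ^ (k-1) := one_le_pow₀ (by norm_num)
        linarith
      refine this.trans ?_
      rw [← two_mul, ← pow_succ']
      apply pow_le_pow_right₀ (by norm_num) (by omega)
    calc ‖((-1 : ℂ) ^ (k - 1) / (k : ℂ)) * ((2 : ℂ) ^ (k - 1) - 1) * riemannZeta (k : ℂ) * s ^ k‖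
        = ‖((-1 : ℂ) ^ (k - 1) / (k : ℂ))‖ * ‖((2 : ℂ) ^ (k - 1) - 1)‖ * ‖riemannZeta (k : ℂ)‖ * ‖s‖^k := by
          simp [norm_mul, norm_pow]
      _ ≤ 1 * 2^k * Z * ‖s‖^k := by
          gcongr
          · exact zeta_norm_le hk
      _ = Z * (2*‖s‖)^k := by rw [mul_pow]; ring
  · simp only [if_neg hk, norm_zero]
    positivity

lemma ratio_eq (s : ℂ) (hs : ‖s‖ < 1 / 2) {n : ℕ} (hn : 1 ≤ n) :
    Complex.GammaSeq (1 + s) n ^ 2 / Complex.GammaSeq (1 + 2 * s) n =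
      ((n : ℂ) / ((n : ℂ) + 1)) *
        ∏ j ∈ range (n + 1), (((j : ℂ) + 1) * ((j : ℂ) + 1 + 2 * s) / (((j : ℂ) + 1 + s) ^ 2)) := by
  have hsre : |s.re| < 1/2 := lt_of_le_of_lt (abs_re_le_norm s) hs
  have hre : -(1/2 : ℝ) < s.re ∧ s.re < 1/2 := abs_lt.mp hsre
  have hne1 : ∀ j : ℕ, (1 : ℂ) + s + (j : ℂ) ≠ 0 := by
    intro j h
    have h' := congrArg Complex.re h
    simp [Complex.add_re] at h'
    have : (0:ℝ) ≤ (j:ℝ) := Nat.cast_nonneg j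
    linarith [hre.1]
  have hN : (n : ℂ) ≠ 0 := Nat.cast_ne_zero.mpr (by omega)
  have hN1 : (n : ℂ) + 1 ≠ 0 := by
    have : ((n+1 : ℕ) : ℂ) ≠ 0 := Nat.cast_ne_zero.mpr (by omega)
    simpa [Nat.cast_add] using this
  have hfact : (n.factorial : ℂ) ≠ 0 := Nat.cast_ne_zero.mpr n.factorial_ne_zero
  have hP1 : (∏ j ∈ range (n + 1), ((1 : ℂ) + s + (j : ℂ))) ≠ 0 :=
    Finset.prod_ne_zero_iff.mpr (fun j _ => hne1 j)
  have hX : ((n : ℂ) ^ ((1 : ℂ) + 2 * s)) ≠ 0 := by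
    simp [Complex.cpow_eq_zero_iff, hN]
  -- the cpow identity
  have key : ((n : ℂ) ^ ((1 : ℂ) + s)) ^ 2 = (n : ℂ) ^ ((1 : ℂ) + 2 * s) * (n : ℂ) := by
    rw [sq, ← Complex.cpow_add _ _ hN]
    have h2 : (1 : ℂ) + s + (1 + s) = (1 + 2*s) + 1 := by ring
    rw [h2, Complex.cpow_add _ _ hN, Complex.cpow_one]
  -- rewrite the product
  have hprodsplit : ∏ j ∈ range (n + 1), (((j : ℂ) + 1) * ((j : ℂ) + 1 + 2 * s) / (((j : ℂ) + 1 + s) ^ 2))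
      = ((n+1).factorial : ℂ) * (∏ j ∈ range (n + 1), ((1 : ℂ) + 2*s + (j : ℂ)))
        / (∏ j ∈ range (n + 1), ((1 : ℂ) + s + (j : ℂ))) ^ 2 := by
    rw [Finset.prod_div_distrib, Finset.prod_mul_distrib, ← Finset.prod_pow]
    congr 1
    · congr 1
      · have hc : (∏ x ∈ range (n+1), ((x:ℂ)+1)) = ((∏ x ∈ range (n+1), (x+1) : ℕ) : ℂ) := by
          push_cast; rfl
        rw [hc, Finset.prod_range_add_one_eq_factorial]
      · exact Finset.prod_congr rfl (fun j _ => by ring)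
    · exact Finset.prod_congr rfl (fun j _ => by ring)
  rw [hprodsplit]
  rw [Complex.GammaSeq, Complex.GammaSeq]
  have hfact1 : ((n+1).factorial : ℂ) = ((n:ℂ)+1) * (n.factorial : ℂ) := by
    rw [Nat.factorial_succ]; push_cast; ring
  rw [hfact1]
  rw [div_pow, mul_pow, key]
  have hP2 : (∏ j ∈ range (n + 1), ((1 : ℂ) + 2*s + (j : ℂ))) ≠ 0 := by
    refine Finset.prod_ne_zero_iff.mpr (fun j _ => fun h => ?_)
    have h' := congrArg Complex.re h
    simp [Complex.add_re] at h'
    have : (0:ℝ) ≤ (j:ℝ) := Nat.cast_nonneg j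
    linarith [hre.1]
  field_simp

noncomputable def aT (s : ℂ) (j k : ℕ) : ℂ :=
  (-1) ^ (k + 1) * ((2 * s / ((j : ℂ) + 1)) ^ k - 2 * (s / ((j : ℂ) + 1)) ^ k) / k

noncomputable def gT (s : ℂ) (j : ℕ) : ℂ :=
  Complex.log (1 + 2 * s / ((j : ℂ) + 1)) - 2 * Complex.log (1 + s / ((j : ℂ) + 1))

lemma stmt14_norm_div (s : ℂ) (hs : ‖s‖ < 1 / 2) (j : ℕ) :
    ‖s / ((j : ℂ) + 1)‖ < 1/2 ∧ ‖2 * s / ((j : ℂ) + 1)‖ < 1 := by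
  have hj : (1:ℝ) ≤ ‖((j : ℂ) + 1)‖ := by
    have h : ((j : ℂ) + 1) = ((j+1 : ℕ) : ℂ) := by push_cast; ring
    rw [h, Complex.norm_natCast]
    exact_mod_cast Nat.succ_le_succ (Nat.zero_le j)
  have hs' : ‖s‖ < 1/2 := hs
  have key : ‖s / ((j:ℂ)+1)‖ < 1/2 := by
    rw [norm_div]
    calc ‖s‖ / ‖((j:ℂ)+1)‖ ≤ ‖s‖ / 1 := by gcongr
      _ < 1/2 := by simpa using hs'
  refine ⟨key, ?_⟩
  have : ‖2 * s / ((j:ℂ)+1)‖ = 2 * ‖s / ((j:ℂ)+1)‖ := by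
    rw [mul_div_assoc, norm_mul]; norm_num
  rw [this]; linarith

lemma stmt14_hasSum_aT (s : ℂ) (hs : ‖s‖ < 1 / 2) (j : ℕ) :
    HasSum (aT s j) (gT s j) := by
  have h := stmt14_norm_div s hs j
  have h1 := Complex.hasSum_taylorSeries_log (z := 2 * s / ((j : ℂ) + 1)) h.2
  have h2 := Complex.hasSum_taylorSeries_log (z := s / ((j : ℂ) + 1)) (h.1.trans one_half_lt_one)
  have h3 := h1.sub (h2.mul_left 2)
  unfold aT gT
  convert h3 using 1
  · rfl
  funext k
  ring

lemma stmt14_aT_zero0 (s : ℂ) (j : ℕ) : aT s j 0 = 0 := by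
  simp [aT]

lemma stmt14_aT_zero1 (s : ℂ) (j : ℕ) : aT s j 1 = 0 := by
  simp [aT]
  ring

lemma stmt14_aT_bound (s : ℂ) (hs : ‖s‖ < 1 / 2) (j k : ℕ) :
    ‖aT s j k‖ ≤ (1/((j:ℝ)+1))^2 * (3 * (2*‖s‖)^k) := by
  match k, (by omega : k = 0 ∨ k = 1 ∨ 2 ≤ k) with
  | 0, _ => simp [stmt14_aT_zero0]; positivity
  | 1, _ => simp [stmt14_aT_zero1]; positivity
  | (k+2), _ =>
    have h := stmt14_norm_div s hs j
    have hj1 : (0:ℝ) < (j:ℝ)+1 := by positivity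
    have hnorm : ‖aT s j (k+2)‖ ≤ ‖(2 * s / ((j : ℂ) + 1)) ^ (k+2) - 2 * (s / ((j : ℂ) + 1)) ^ (k+2)‖ := by
      unfold aT
      rw [norm_div, norm_mul, norm_pow, norm_neg, norm_one, one_pow, one_mul]
      apply div_le_self (norm_nonneg _)
      · rw [Complex.norm_natCast]
        have := Nat.cast_nonneg (α := ℝ) k
        push_cast
        linarith
    refine hnorm.trans ?_
    set a := ‖s‖ with ha
    set m := (j:ℝ)+1 with hm
    have hm1 : (1:ℝ) ≤ m := by rw [hm]; linarith [Nat.cast_nonneg (α := ℝ) j]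
    have hm0 : (0:ℝ) < m := by linarith
    have ha0 : (0:ℝ) ≤ a := norm_nonneg s
    have hmc : ‖((j : ℂ) + 1)‖ = m := by
      have h' : ((j : ℂ) + 1) = ((j+1 : ℕ) : ℂ) := by push_cast; ring
      rw [h', Complex.norm_natCast]; push_cast; rfl
    have hx : ‖(2 * s / ((j : ℂ) + 1))‖ = 2*a/m := by
      rw [norm_div, norm_mul, hmc, ha]; norm_num
    have hy : ‖(s / ((j : ℂ) + 1))‖ = a/m := by
      rw [norm_div, hmc, ha]
    have h1 : ‖(2 * s / ((j : ℂ) + 1)) ^ (k+2) - 2 * (s / ((j : ℂ) + 1)) ^ (k+2)‖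
        ≤ (2*a/m)^(k+2) + 2*(a/m)^(k+2) := by
      refine (norm_sub_le _ _).trans ?_
      rw [norm_pow, norm_mul, norm_pow, hx, hy]
      norm_num
    refine h1.trans ?_
    have h2 : (a/m)^(k+2) ≤ (2*a/m)^(k+2) :=
      pow_le_pow_left₀ (by positivity) ((div_le_div_iff_of_pos_right hm0).mpr (by linarith)) _
    have h3 : (2*a/m)^(k+2) = (2*a)^(k+2)/m^(k+2) := div_pow _ _ _
    have h4 : (2*a)^(k+2)/m^(k+2) ≤ (2*a)^(k+2)/m^2 :=
      div_le_div_of_nonneg_left (by positivity) (by positivity) (pow_le_pow_right₀ hm1 (by omega))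
    have h5 : (1/m)^2 * (3*(2*a)^(k+2)) = 3*((2*a)^(k+2)/m^2) := by
      field_simp
    rw [h5]
    linarith [h2, h3, h4]

lemma stmt14_summable_unc (s : ℂ) (hs : ‖s‖ < 1 / 2) :
    Summable (Function.uncurry (aT s)) := by
  have hsub : Summable (fun j : ℕ => (1/((j:ℝ)+1))^2) := by
    have h0 : Summable (fun j : ℕ => 1/((j:ℝ))^2) := Real.summable_one_div_nat_pow.mpr one_lt_two
    have := (summable_nat_add_iff 1).mpr h0
    refine this.congr (fun j => ?_)
    push_cast
    rw [div_pow, one_pow]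
  have hgeom : Summable (fun k : ℕ => 3 * (2*‖s‖)^k) := by
    have hs' : ‖s‖ < 1/2 := hs
    exact (summable_geometric_of_lt_one (by positivity) (by linarith)).mul_left 3
  have hb : Summable (fun p : ℕ × ℕ => (1/((p.1:ℝ)+1))^2 * (3 * (2*‖s‖)^p.2)) :=
    hsub.mul_of_nonneg hgeom (fun j => by positivity) (fun k => by positivity)
  refine Summable.of_norm_bounded hb (fun p => ?_)
  exact stmt14_aT_bound s hs p.1 p.2

lemma stmt14_inner (s : ℂ) {k : ℕ} (hk : 2 ≤ k) :
    ∑' j : ℕ, aT s j k =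
      2 * (((-1 : ℂ) ^ (k - 1) / (k : ℂ)) * ((2 : ℂ) ^ (k - 1) - 1) *
        riemannZeta (k : ℂ) * s ^ k) := by
  have hre : 1 < ((k : ℂ)).re := by
    simp only [Complex.natCast_re]
    exact_mod_cast hk
  have hz : riemannZeta (k : ℂ) = ∑' n : ℕ, 1 / ((n : ℂ) + 1) ^ k := by
    rw [zeta_eq_tsum_one_div_nat_add_one_cpow hre]
    simp [Complex.cpow_natCast]
  set C : ℂ := (-1) ^ (k + 1) * ((2 * s) ^ k - 2 * s ^ k) / k with hC
  have h1 : ∀ j : ℕ, aT s j k = C * (1 / ((j : ℂ) + 1) ^ k) := by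
    intro j
    unfold aT
    rw [div_pow, div_pow, hC]
    ring
  rw [tsum_congr h1, tsum_mul_left, ← hz]
  obtain ⟨m, rfl⟩ : ∃ m, k = m + 2 := ⟨k - 2, by omega⟩
  have hkm : m + 2 - 1 = m + 1 := by omega
  rw [hC, hkm]
  push_cast
  ring

lemma stmt14_exp_gT (s : ℂ) (hs : ‖s‖ < 1 / 2) (j : ℕ) :
    Complex.exp (gT s j) =
      ((j : ℂ) + 1) * ((j : ℂ) + 1 + 2 * s) / (((j : ℂ) + 1 + s) ^ 2) := by
  have h := stmt14_norm_div s hs j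
  have hA : (1 : ℂ) + 2 * s / ((j : ℂ) + 1) ≠ 0 := by
    intro hz
    have : (2 * s / ((j : ℂ) + 1)) = -1 := by linear_combination hz
    rw [this] at h
    norm_num at h
  have hB : (1 : ℂ) + s / ((j : ℂ) + 1) ≠ 0 := by
    intro hz
    have : (s / ((j : ℂ) + 1)) = -1 := by linear_combination hz
    rw [this] at h
    norm_num at h
  have hj : ((j : ℂ) + 1) ≠ 0 := by
    intro hz
    have h0 : ((j + 1 : ℕ) : ℂ) = 0 := by push_cast; linear_combination hz
    exact Nat.cast_ne_zero.mpr (Nat.succ_ne_zero j) h0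
  have hBj : ((j : ℂ) + 1 + s) ≠ 0 := by
    intro hz
    apply hB
    field_simp
    linear_combination hz
  rw [gT, Complex.exp_sub,
    show (2:ℂ) * Complex.log (1 + s/((j:ℂ)+1))
      = Complex.log (1 + s/((j:ℂ)+1)) + Complex.log (1 + s/((j:ℂ)+1)) from two_mul _,
    Complex.exp_add, Complex.exp_log hA, Complex.exp_log hB]
  field_simp

theorem stmt14' (s : ℂ) (hs : ‖s‖ < 1 / 2) :
    Complex.Gamma (1 + s) ^ 2 / Complex.Gamma (1 + 2 * s) =
      Complex.exp (2 * ∑' k : ℕ, (if 2 ≤ k then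
        ((-1 : ℂ) ^ (k - 1) / (k : ℂ)) * ((2 : ℂ) ^ (k - 1) - 1) *
          riemannZeta (k : ℂ) * s ^ k else 0)) := by
  have hunc := stmt14_summable_unc s hs
  have hg : ∀ j, HasSum (aT s j) (gT s j) := stmt14_hasSum_aT s hs
  have hsg : Summable (gT s) := by
    refine hunc.prod.congr (fun j => ?_)
    exact (hg j).tsum_eq
  have hS : ∑' j, gT s j = 2 * ∑' k : ℕ, (if 2 ≤ k then
      ((-1 : ℂ) ^ (k - 1) / (k : ℂ)) * ((2 : ℂ) ^ (k - 1) - 1) *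
        riemannZeta (k : ℂ) * s ^ k else 0) := by
    calc ∑' j, gT s j = ∑' j, ∑' k, aT s j k := tsum_congr (fun j => (hg j).tsum_eq.symm)
      _ = ∑' k, ∑' j, aT s j k := (hunc.tsum_comm).symm
      _ = ∑' k : ℕ, 2 * (if 2 ≤ k then
            ((-1 : ℂ) ^ (k - 1) / (k : ℂ)) * ((2 : ℂ) ^ (k - 1) - 1) *
              riemannZeta (k : ℂ) * s ^ k else 0) := by
          refine tsum_congr (fun k => ?_)
          by_cases hk : 2 ≤ k
          · rw [if_pos hk]
            exact stmt14_inner s hk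
          · rw [if_neg hk, mul_zero]
            match k, (by omega : k = 0 ∨ k = 1) with
            | 0, _ => simp [stmt14_aT_zero0]
            | 1, _ => simp [stmt14_aT_zero1]
      _ = _ := tsum_mul_left
  have hre2 : 0 < (1 + 2 * s).re := by
    have h1 : |s.re| < 1/2 := lt_of_le_of_lt (Complex.abs_re_le_norm s) hs
    rw [abs_lt] at h1
    simp only [Complex.add_re, Complex.one_re, Complex.mul_re, Complex.ofReal_re]
    norm_num
    linarith [h1.1]
  have hΓ2 : Complex.Gamma (1 + 2 * s) ≠ 0 := Complex.Gamma_ne_zero_of_re_pos hre2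
  have hlim1 : Tendsto (fun n : ℕ => Complex.GammaSeq (1 + s) n ^ 2 / Complex.GammaSeq (1 + 2 * s) n)
      atTop (𝓝 (Complex.Gamma (1 + s) ^ 2 / Complex.Gamma (1 + 2 * s))) :=
    ((Complex.GammaSeq_tendsto_Gamma (1 + s)).pow 2).div
      (Complex.GammaSeq_tendsto_Gamma (1 + 2 * s)) hΓ2
  have hlim2 : Tendsto (fun n : ℕ => ((n : ℂ) / ((n : ℂ) + 1)) *
      ∏ j ∈ range (n + 1), (((j : ℂ) + 1) * ((j : ℂ) + 1 + 2 * s) / (((j : ℂ) + 1 + s) ^ 2)))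
      atTop (𝓝 (1 * Complex.exp (∑' j, gT s j))) := by
    refine Tendsto.mul ?_ ?_
    · exact tendsto_natCast_div_add_atTop (1 : ℂ)
    · have h2 : Tendsto (fun n : ℕ => Complex.exp (∑ j ∈ range (n + 1), gT s j)) atTop
          (𝓝 (Complex.exp (∑' j, gT s j))) :=
        (Complex.continuous_exp.tendsto _).comp
          ((hsg.hasSum.tendsto_sum_nat).comp (tendsto_add_atTop_nat 1))
      refine h2.congr (fun n => ?_)
      rw [Complex.exp_sum]
      exact Finset.prod_congr rfl (fun j _ => (stmt14_exp_gT s hs j))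
  rw [one_mul] at hlim2
  have heq : (fun n : ℕ => Complex.GammaSeq (1 + s) n ^ 2 / Complex.GammaSeq (1 + 2 * s) n)
      =ᶠ[atTop] (fun n : ℕ => ((n : ℂ) / ((n : ℂ) + 1)) *
        ∏ j ∈ range (n + 1), (((j : ℂ) + 1) * ((j : ℂ) + 1 + 2 * s) / (((j : ℂ) + 1 + s) ^ 2))) := by
    filter_upwards [eventually_ge_atTop 1] with n hn
    exact ratio_eq s hs hn
  have hfinal := tendsto_nhds_unique (hlim1.congr' heq) hlim2
  rw [hfinal, hS]


/-- Example 6.1 of the paper.  For `|s| < 1/2`, the series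
`∑_{k≥2} ((−1)^{k−1}/k)(2^{k−1}−1)ζ(k)s^k` converges absolutely and
`Γ(1+s)²/Γ(1+2s) = exp(2·∑_{k≥2} ((−1)^{k−1}/k)(2^{k−1}−1)ζ(k)s^k)`. -/
theorem stmt14 (s : ℂ) (hs : ‖s‖ < 1 / 2) :
    Summable (fun k : ℕ => ‖(if 2 ≤ k then
      ((-1 : ℂ) ^ (k - 1) / (k : ℂ)) * ((2 : ℂ) ^ (k - 1) - 1) *
        riemannZeta (k : ℂ) * s ^ k else 0)‖) ∧
    Complex.Gamma (1 + s) ^ 2 / Complex.Gamma (1 + 2 * s) =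
      Complex.exp (2 * ∑' k : ℕ, (if 2 ≤ k then
        ((-1 : ℂ) ^ (k - 1) / (k : ℂ)) * ((2 : ℂ) ^ (k - 1) - 1) *
          riemannZeta (k : ℂ) * s ^ k else 0)) :=
  ⟨stmt14_summable s hs, stmt14' s hs⟩
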